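/- Let G be a connected tree on the vertex set {1,…,s} and let f be a nonzero element of KE(G), written uniquely as f = Σ_{e ∈ E(G)} c_e t_i t_j (where e = {i,j} ranges over the edges of G and c_e ∈ K). Let r ≥ 1 be the number of edges e with c_e ≠ 0. Then the number of zeros of f in the affine torus is |V_T(f)| = (q−1)^{s−1} − (q−1)^{s−2} + ⋯ + (−1)^r (q−1)^{s−(r−1)}, i.e. |V_T(f)| = Σ_{i=1}^{r−1} (−1)^{i−1} (q−1)^{s−i}. -/

import Mathlib

open MvPolynomial

/-- The affine torus `T = (K*)^s`: points of `K^s` with all coordinates nonzero. -/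
abbrev Torus (s : ℕ) (K : Type) [Zero K] := {P : Fin s → K // ∀ i, P i ≠ 0}

/-- The evaluation map `f ↦ (f(P))_{P ∈ T}` as a linear map. -/
noncomputable def evalTorus (s : ℕ) (K : Type) [Field K] :
    MvPolynomial (Fin s) K →ₗ[K] (Torus s K → K) :=
  LinearMap.pi fun P => (aeval (P.1 : Fin s → K)).toLinearMap

/-- The edge code of a hypergraph with edge set `E` on vertex set `{1,…,s}`:
the image under evaluation of the span of the squarefree monomials `∏_{j ∈ e} t_j`. -/
noncomputable def edgeCode (s : ℕ) (K : Type) [Field K] (E : Set (Finset (Fin s))) :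
    Submodule K (Torus s K → K) :=
  (Submodule.span K ((fun e : Finset (Fin s) => ∏ j ∈ e, X j) '' E)).map (evalTorus s K)

/-- Hamming weight of a word indexed by the torus. -/
noncomputable def wt {s : ℕ} {K : Type} [Field K] (c : Torus s K → K) : ℕ :=
  {P | c P ≠ 0}.ncard

/-- Minimum distance of a linear code: the least Hamming weight of a nonzero codeword. -/
noncomputable def minDist {s : ℕ} {K : Type} [Field K] (C : Submodule K (Torus s K → K)) : ℕ :=
  sInf {w : ℕ | ∃ c ∈ C, c ≠ 0 ∧ wt c = w}

/-- The squarefree monomial `t_i t_j` attached to an edge `{i,j}` of a simple graph. -/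
noncomputable def edgeMonSym2 (s : ℕ) (K : Type) [Field K] (e : Sym2 (Fin s)) :
    MvPolynomial (Fin s) K :=
  Sym2.lift ⟨fun i j => X i * X j, fun _ _ => mul_comm _ _⟩ e

/-- The edge code of a simple graph on `{1,…,s}`. -/
noncomputable def graphCode (s : ℕ) (K : Type) [Field K] (G : SimpleGraph (Fin s)) :
    Submodule K (Torus s K → K) :=
  (Submodule.span K (edgeMonSym2 s K '' G.edgeSet)).map (evalTorus s K)

open Finset
lemma exists_leaf {V : Type*} [Fintype V] [DecidableEq V] {H : SimpleGraph V}
    (hH : H.IsAcyclic) {a₀ b₀ : V} (h₀ : H.Adj a₀ b₀) :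
    ∃ v x, H.Adj v x ∧ ∀ w, H.Adj v w → w = x := by
  classical
  set S : Set ℕ := {n | ∃ (a b : V) (p : H.Walk a b), p.IsPath ∧ p.length = n} with hS
  have hbdd : BddAbove S := ⟨Fintype.card V, by
    rintro n ⟨a, b, p, hp, rfl⟩; exact hp.length_lt.le⟩
  have h1 : 1 ∈ S := ⟨a₀, b₀, (SimpleGraph.Path.singleton h₀).1,
    (SimpleGraph.Path.singleton h₀).2, rfl⟩
  have hmem : sSup S ∈ S := Nat.sSup_mem ⟨1, h1⟩ hbdd
  have hge : 1 ≤ sSup S := le_csSup hbdd h1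
  obtain ⟨a, b, p, hp, hlen⟩ := hmem
  cases p with
  | nil => simp at hlen; omega
  | cons h' q =>
    rename_i y
    refine ⟨a, y, h', fun w hw => ?_⟩
    by_contra hwy
    by_cases hws : w ∈ (SimpleGraph.Walk.cons h' q).support
    · have hr : ((SimpleGraph.Walk.cons h' q).takeUntil w hws).IsPath := hp.takeUntil hws
      have hedge : s(w, a) ∉ ((SimpleGraph.Walk.cons h' q).takeUntil w hws).edges := by
        intro hmem'
        have h2 := SimpleGraph.Walk.edges_takeUntil_subset _ hws hmem'
        rw [SimpleGraph.Walk.edges_cons] at h2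
        rcases List.mem_cons.1 h2 with h3 | h3
        · rw [Sym2.eq_iff] at h3
          rcases h3 with ⟨rfl, rfl⟩ | ⟨rfl, -⟩
          · exact hw.ne rfl
          · exact hwy rfl
        · have := SimpleGraph.Walk.snd_mem_support_of_mem_edges q h3
          exact ((SimpleGraph.Walk.cons_isPath_iff _ _).1 hp).2 this
      have hcyc : (SimpleGraph.Walk.cons hw.symm
          ((SimpleGraph.Walk.cons h' q).takeUntil w hws)).IsCycle := by
        rw [SimpleGraph.Walk.cons_isCycle_iff]; exact ⟨hr, hedge⟩
      exact hH _ hcyc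
    · have hp' : (SimpleGraph.Walk.cons hw.symm (SimpleGraph.Walk.cons h' q)).IsPath :=
        hp.cons hws
      have : (SimpleGraph.Walk.cons h' q).length + 1 ∈ S := ⟨w, b, _, hp', rfl⟩
      have := le_csSup hbdd this
      omega

lemma isAcyclic_mono {V : Type*} {H G : SimpleGraph V} (hle : H ≤ G) (hG : G.IsAcyclic) :
    H.IsAcyclic := fun _ c hc => hG (c.mapLe hle) (hc.mapLe hle)

noncomputable def expo (s : ℕ) (e : Sym2 (Fin s)) : Fin s →₀ ℕ :=
  Sym2.lift ⟨fun i j => Finsupp.single i 1 + Finsupp.single j 1,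
    fun _ _ => add_comm _ _⟩ e

lemma edgeMonSym2_eq_monomial (s : ℕ) (K : Type) [Field K] (e : Sym2 (Fin s)) :
    edgeMonSym2 s K e = monomial (expo s e) (1 : K) := by
  induction e using Sym2.inductionOn with
  | hf i j =>
    simp only [edgeMonSym2, expo, Sym2.lift_mk]
    rw [X, X, monomial_mul, one_mul]

lemma pair_finsupp_inj {α : Type*} [DecidableEq α] {i j k l : α}
    (h : Finsupp.single i 1 + Finsupp.single j 1 = Finsupp.single k 1 + Finsupp.single l 1) :
    (i = k ∧ j = l) ∨ (i = l ∧ j = k) := by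
  have h2 := congrArg Finsupp.toMultiset h
  simp only [map_add, Finsupp.toMultiset_single, one_smul] at h2
  have h3 : (i ::ₘ {j} : Multiset α) = k ::ₘ {l} := by
    simpa [Multiset.cons_eq_cons] using h2
  rw [Multiset.cons_eq_cons] at h3
  rcases h3 with ⟨h4, h5⟩ | ⟨h4, cs, h5, h6⟩
  · exact Or.inl ⟨h4, by simpa using h5⟩
  · rw [Multiset.singleton_eq_cons_iff] at h5 h6
    exact Or.inr ⟨(h6.1).symm, h5.1⟩

lemma expo_inj {s : ℕ} {e e' : Sym2 (Fin s)}
    (h : expo s e = expo s e') : e = e' := by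
  induction e using Sym2.inductionOn with
  | hf i j =>
    induction e' using Sym2.inductionOn with
    | hf k l =>
      simp only [expo, Sym2.lift_mk] at h
      rcases pair_finsupp_inj h with ⟨rfl, rfl⟩ | ⟨rfl, rfl⟩
      · rfl
      · exact Sym2.eq_swap

lemma eval_edgeMon (s : ℕ) (K : Type) [Field K] (P : Fin s → K) (i j : Fin s) :
    eval P (edgeMonSym2 s K s(i, j)) = P i * P j := by
  simp [edgeMonSym2]

lemma eval_update_edgeMon (s : ℕ) (K : Type) [Field K] [DecidableEq K]
    (P : Fin s → K) (v : Fin s) (a : K) {e : Sym2 (Fin s)} (hv : v ∉ e) :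
    eval (Function.update P v a) (edgeMonSym2 s K e) = eval P (edgeMonSym2 s K e) := by
  induction e using Sym2.inductionOn with
  | hf i j =>
    rw [Sym2.mem_iff] at hv
    push_neg at hv
    rw [eval_edgeMon, eval_edgeMon,
      Function.update_of_ne (by exact fun h => hv.1 h.symm),
      Function.update_of_ne (by exact fun h => hv.2 h.symm)]

lemma aux_count (q s : ℕ) (K : Type) [Field K] [Fintype K] [DecidableEq K]
    (hK : Fintype.card K = q) (G : SimpleGraph (Fin s)) [DecidableRel G.Adj] (hG : G.IsTree) :
    ∀ r : ℕ, 1 ≤ r → ∀ c : Sym2 (Fin s) → K,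
      r = (G.edgeFinset.filter fun e => c e ≠ 0).card →
      ((Finset.univ.filter fun P : Fin s → K =>
          (∀ i, P i ≠ 0) ∧ eval P (∑ e ∈ G.edgeFinset, c e • edgeMonSym2 s K e) = 0).card : ℤ)
        = ∑ i ∈ Finset.range (r - 1), (-1) ^ i * ((q : ℤ) - 1) ^ (s - (i + 1)) := by
  have hq2 : 2 ≤ q := hK ▸ Fintype.one_lt_card
  have hEF : G.edgeFinset.card + 1 = s := by
    simpa using hG.card_edgeFinset
  intro r
  induction r with
  | zero => intro h; omega
  | succ n ih =>
    intro _ c hrc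
    set E := G.edgeFinset.filter fun e' => c e' ≠ 0 with hE
    have hEsub : ∀ {e'}, e' ∈ E → e' ∈ G.edgeSet := fun h =>
      SimpleGraph.mem_edgeFinset.1 (mem_filter.1 h).1
    -- every member of E is a nondiagonal edge
    have hadj : ∀ e' : Sym2 (Fin s), e' ∈ E →
        ∃ a b : Fin s, e' = s(a, b) ∧ a ≠ b ∧ c e' ≠ 0 := by
      intro e'
      induction e' using Sym2.inductionOn with
      | hf a b =>
        intro he'
        have hd : ¬ (s(a, b) : Sym2 (Fin s)).IsDiag :=
          G.not_isDiag_of_mem_edgeSet (hEsub he')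
        exact ⟨a, b, rfl, by simpa using hd, (mem_filter.1 he').2⟩
    set f := ∑ e' ∈ G.edgeFinset, c e' • edgeMonSym2 s K e' with hfdef
    have hevalE : ∀ P : Fin s → K,
        eval P f = ∑ e' ∈ E, c e' * eval P (edgeMonSym2 s K e') := by
      intro P
      rw [hfdef, map_sum]
      simp only [smul_eval]
      exact (Finset.sum_filter_of_ne (s := G.edgeFinset) (p := fun e' => c e' ≠ 0)
        (f := fun e' => c e' * eval P (edgeMonSym2 s K e'))
        (fun e' _ h0 hc0 => h0 (by simp [hc0]))).symm
    by_cases hn : n = 0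
    · -- base case: exactly one nonzero coefficient, no zeros on the torus
      subst hn
      obtain ⟨e₁, hE1⟩ := Finset.card_eq_one.1 hrc.symm
      obtain ⟨a, b, rfl, hab, hc1⟩ := hadj e₁ (hE1 ▸ Finset.mem_singleton_self e₁)
      have hempty : (Finset.univ.filter fun P : Fin s → K =>
          (∀ i, P i ≠ 0) ∧ eval P f = 0) = ∅ := by
        rw [Finset.filter_eq_empty_iff]
        rintro P - ⟨hP1, hP2⟩
        rw [hevalE, hE1, Finset.sum_singleton, eval_edgeMon] at hP2
        exact (mul_ne_zero hc1 (mul_ne_zero (hP1 a) (hP1 b))) hP2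
      rw [hempty]
      simp
    -- inductive step
    have hn1 : 1 ≤ n := by omega
    obtain ⟨e₀, he₀⟩ : E.Nonempty := Finset.card_pos.1 (by omega)
    set H := SimpleGraph.fromEdgeSet (E : Set (Sym2 (Fin s))) with hH
    have hHle : H ≤ G := by
      intro a b hab
      rw [hH, SimpleGraph.fromEdgeSet_adj] at hab
      exact G.mem_edgeSet.1 (hEsub (by exact_mod_cast hab.1))
    have hHacyc : H.IsAcyclic := isAcyclic_mono hHle hG.IsAcyclic
    obtain ⟨a₀, b₀, he₀eq, h₀ne, -⟩ := hadj e₀ he₀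
    have h₀adj : H.Adj a₀ b₀ := by
      rw [hH, SimpleGraph.fromEdgeSet_adj]
      exact ⟨by rw [← he₀eq]; exact_mod_cast he₀, h₀ne⟩
    obtain ⟨v, x, hvx, huniq⟩ := exists_leaf hHacyc h₀adj
    have hvxadj := hvx
    rw [hH, SimpleGraph.fromEdgeSet_adj] at hvxadj
    have hevx : (s(v, x) : Sym2 (Fin s)) ∈ E := by exact_mod_cast hvxadj.1
    have hvxne : v ≠ x := hvxadj.2
    have hxv : x ≠ v := hvxne.symm
    have hce : c s(v, x) ≠ 0 := (mem_filter.1 hevx).2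
    have heEF : (s(v, x) : Sym2 (Fin s)) ∈ G.edgeFinset := (mem_filter.1 hevx).1
    have hleaf : ∀ e' ∈ E, v ∈ e' → e' = s(v, x) := by
      intro e' he' hv
      obtain ⟨w, rfl⟩ := Sym2.mem_iff_exists.1 hv
      obtain ⟨a, b, heq, hab, -⟩ := hadj _ he'
      have hvw : v ≠ w := by
        intro h
        rw [← h] at heq
        rw [Sym2.eq_iff] at heq
        rcases heq with ⟨rfl, rfl⟩ | ⟨rfl, rfl⟩ <;> exact hab rfl
      have : H.Adj v w := by
        rw [hH, SimpleGraph.fromEdgeSet_adj]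
        exact ⟨by exact_mod_cast he', hvw⟩
      rw [huniq w this]
    set c' := Function.update c s(v, x) 0 with hc'
    have hc'filter : (G.edgeFinset.filter fun e' => c' e' ≠ 0) = E.erase s(v, x) := by
      ext e'
      by_cases h : e' = s(v, x)
      · subst h
        simp [hc', Function.update_self]
      · simp only [mem_filter, Finset.mem_erase, hE, hc', Function.update_of_ne h]
        tauto
    have hcard' : n = (G.edgeFinset.filter fun e' => c' e' ≠ 0).card := by
      rw [hc'filter, Finset.card_erase_of_mem hevx]; omega
    set g := ∑ e' ∈ G.edgeFinset, c' e' • edgeMonSym2 s K e' with hg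
    have hgerase : g = ∑ e' ∈ G.edgeFinset.erase s(v, x), c e' • edgeMonSym2 s K e' := by
      rw [hg, ← Finset.sum_erase_add _ _ heEF, hc', Function.update_self, zero_smul, add_zero]
      exact Finset.sum_congr rfl fun e' he' => by
        rw [Function.update_of_ne (Finset.mem_erase.1 he').1]
    have hfg : f = g + c s(v, x) • edgeMonSym2 s K s(v, x) := by
      rw [hgerase, hfdef]
      exact (Finset.sum_erase_add _ _ heEF).symm
    have hvnot : ∀ e' ∈ G.edgeFinset, c' e' ≠ 0 → v ∉ e' := by
      intro e' hEF' h0 hv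
      have hne' : e' ≠ s(v, x) := by
        intro h
        rw [h, hc', Function.update_self] at h0
        exact h0 rfl
      have he'E : e' ∈ E := by
        rw [hc', Function.update_of_ne hne'] at h0
        exact mem_filter.2 ⟨hEF', h0⟩
      exact hne' (hleaf e' he'E hv)
    have hgupd : ∀ (P : Fin s → K) (a : K),
        eval (Function.update P v a) g = eval P g := by
      intro P a
      rw [hg, map_sum, map_sum]
      refine Finset.sum_congr rfl fun e' he' => ?_
      by_cases h0 : c' e' = 0
      · simp [h0]
      · rw [smul_eval, smul_eval, eval_update_edgeMon _ _ _ _ _ (hvnot e' he' h0)]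
    have keyeval : ∀ P : Fin s → K,
        eval P f = eval P g + c s(v, x) * (P v * P x) := by
      intro P
      rw [hfg, map_add, smul_eval, eval_edgeMon]
    -- counting sets
    set S1 := Finset.univ.filter fun P : Fin s → K =>
      (∀ i, P i ≠ 0) ∧ eval P f = 0 with hS1
    set S2 := Finset.univ.filter fun P : Fin s → K =>
      (∀ i, P i ≠ 0) ∧ eval P g ≠ 0 with hS2
    set S3 := Finset.univ.filter fun P : Fin s → K =>
      (∀ i, P i ≠ 0) ∧ eval P g = 0 with hS3
    set T := Finset.univ.filter fun P : Fin s → K => (∀ i, P i ≠ 0) with hT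
    set nz := (Finset.univ : Finset K).erase 0 with hnz
    have hnzcard : nz.card = q - 1 := by
      rw [hnz, Finset.card_erase_of_mem (Finset.mem_univ _), Finset.card_univ, hK]
    have hTcard : T.card = (q - 1) ^ s := by
      have hTeq : T = Fintype.piFinset fun _ : Fin s => (Finset.univ : Finset K).erase 0 := by
        ext P
        simp [hT, Fintype.mem_piFinset, Finset.mem_erase]
      rw [hTeq, Fintype.card_piFinset]
      simp [Finset.card_erase_of_mem, hK]
    have hsplit : S3.card + S2.card = T.card := by
      have h1 : S3 = T.filter fun P => eval P g = 0 := by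
        rw [hT, Finset.filter_filter]
      have h2 : S2 = T.filter fun P => ¬ (eval P g = 0) := by
        rw [hT, Finset.filter_filter]
      rw [h1, h2]
      exact Finset.card_filter_add_card_filter_not _
    have hS21 : S2.card = S1.card * nz.card := by
      rw [← Finset.card_product]
      refine Finset.card_nbij'
        (fun P => (Function.update P v (-(eval P g) / (c s(v, x) * P x)), P v))
        (fun Qb => Function.update Qb.1 v Qb.2) ?_ ?_ ?_ ?_
      · rintro P hP
        obtain ⟨-, hP1, hP2⟩ := mem_filter.1 hP
        have hden : c s(v, x) * P x ≠ 0 := mul_ne_zero hce (hP1 x)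
        have ha0 : -(eval P g) / (c s(v, x) * P x) ≠ 0 :=
          div_ne_zero (neg_ne_zero.2 hP2) hden
        refine Finset.mem_product.2 ⟨mem_filter.2 ⟨Finset.mem_univ _, ?_, ?_⟩,
          Finset.mem_erase.2 ⟨hP1 v, Finset.mem_univ _⟩⟩
        · intro i
          show Function.update P v (-(eval P g) / (c s(v, x) * P x)) i ≠ 0
          by_cases hiv : i = v
          · subst hiv; rw [Function.update_self]; exact ha0
          · rw [Function.update_of_ne hiv]; exact hP1 i
        · show eval (Function.update P v (-(eval P g) / (c s(v, x) * P x))) f = 0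
          rw [keyeval, hgupd, Function.update_self, Function.update_of_ne hxv]
          field_simp
          rw [div_self (hP1 x)]
          ring
      · rintro ⟨Q, b⟩ h
        obtain ⟨hQ, hb⟩ := Finset.mem_product.1 h
        obtain ⟨-, hQ1, hQ2⟩ := mem_filter.1 hQ
        have hb0 : b ≠ 0 := (Finset.mem_erase.1 hb).1
        have hQg : eval Q g = -(c s(v, x) * (Q v * Q x)) := by
          rw [keyeval] at hQ2
          exact eq_neg_of_add_eq_zero_left hQ2
        refine mem_filter.2 ⟨Finset.mem_univ _, ?_, ?_⟩
        · intro i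
          show Function.update Q v b i ≠ 0
          by_cases hiv : i = v
          · subst hiv; rw [Function.update_self]; exact hb0
          · rw [Function.update_of_ne hiv]; exact hQ1 i
        · show eval (Function.update Q v b) g ≠ 0
          rw [hgupd, hQg]
          exact neg_ne_zero.2 (mul_ne_zero hce (mul_ne_zero (hQ1 v) (hQ1 x)))
      · intro P hP
        show Function.update (Function.update P v (-(eval P g) / (c s(v, x) * P x))) v (P v) = P
        rw [Function.update_idem, Function.update_eq_self]
      · rintro ⟨Q, b⟩ h
        obtain ⟨hQ, hb⟩ := Finset.mem_product.1 h
        obtain ⟨-, hQ1, hQ2⟩ := mem_filter.1 hQ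
        have hQg : eval Q g = -(c s(v, x) * (Q v * Q x)) := by
          rw [keyeval] at hQ2
          exact eq_neg_of_add_eq_zero_left hQ2
        have h6 : -(eval (Function.update Q v b) g) /
            (c s(v, x) * (Function.update Q v b) x) = Q v := by
          rw [hgupd, Function.update_of_ne hxv, hQg, neg_neg,
            show c s(v, x) * (Q v * Q x) = (c s(v, x) * Q x) * Q v from by ring,
            mul_div_cancel_left₀ _ (mul_ne_zero hce (hQ1 x))]
        show (Function.update (Function.update Q v b) v
            (-(eval (Function.update Q v b) g) / (c s(v, x) * (Function.update Q v b) x)),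
            (Function.update Q v b) v) = (Q, b)
        rw [h6, Function.update_idem, Function.update_eq_self, Function.update_self]
    -- apply induction hypothesis
    have ihc := ih hn1 c' hcard'
    rw [← hg, ← hS3] at ihc
    -- final algebra
    have hsn : n + 2 ≤ s := by
      have h7 : E.card ≤ G.edgeFinset.card := by
        rw [hE]; exact Finset.card_filter_le _ _
      omega
    have hZ : (S1.card : ℤ) * ((q : ℤ) - 1) + (S3.card : ℤ) = ((q : ℤ) - 1) ^ s := by
      have h8 : S3.card + S1.card * (q - 1) = (q - 1) ^ s := by
        rw [← hnzcard, ← hS21, hsplit, hTcard, hnzcard]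
      have h9 := congrArg (Nat.cast : ℕ → ℤ) h8
      push_cast [Nat.cast_sub (by omega : 1 ≤ q)] at h9
      linarith
    have hqz : ((q : ℤ) - 1) ≠ 0 := by
      have : (2 : ℤ) ≤ (q : ℤ) := by exact_mod_cast hq2
      omega
    have key : (S1.card : ℤ) * ((q : ℤ) - 1)
        = (∑ i ∈ Finset.range ((n + 1) - 1), (-1) ^ i * ((q : ℤ) - 1) ^ (s - (i + 1)))
          * ((q : ℤ) - 1) := by
      have hstep : ∀ i ∈ Finset.range n,
          ((-1 : ℤ)) ^ i * ((q : ℤ) - 1) ^ (s - (i + 1)) * ((q : ℤ) - 1)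
            = (-1) ^ i * ((q : ℤ) - 1) ^ (s - i) := by
        intro i hi
        rw [mul_assoc, ← pow_succ]
        congr 2
        have := Finset.mem_range.1 hi
        omega
      rw [show (n + 1) - 1 = n from rfl, Finset.sum_mul, Finset.sum_congr rfl hstep,
        show n = (n - 1) + 1 from by omega, Finset.sum_range_succ']
      have hstep2 : ∀ i ∈ Finset.range (n - 1),
          ((-1 : ℤ)) ^ (i + 1) * ((q : ℤ) - 1) ^ (s - (i + 1))
            = -((-1) ^ i * ((q : ℤ) - 1) ^ (s - (i + 1))) := by
        intro i _
        rw [pow_succ]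
        ring
      rw [Finset.sum_congr rfl hstep2, Finset.sum_neg_distrib, pow_zero, one_mul,
        Nat.sub_zero, ← ihc]
      linarith [hZ]
    exact mul_right_cancel₀ hqz key

lemma ncard_torus_eq (s : ℕ) (K : Type) [Field K] [Fintype K] [DecidableEq K]
    (f : MvPolynomial (Fin s) K) :
    {P : Torus s K | eval P.1 f = 0}.ncard
      = (Finset.univ.filter fun P : Fin s → K =>
          (∀ i, P i ≠ 0) ∧ eval P f = 0).card := by
  classical
  rw [Set.ncard_eq_toFinset_card', Set.toFinset_setOf]
  refine Finset.card_bij' (fun P _ => P.1)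
    (fun P hP => ⟨P, (Finset.mem_filter.1 hP).2.1⟩) ?_ ?_ ?_ ?_
  · intro P hP
    exact Finset.mem_filter.2 ⟨Finset.mem_univ _, P.2, (Finset.mem_filter.1 hP).2⟩
  · intro P hP
    exact Finset.mem_filter.2 ⟨Finset.mem_univ _, (Finset.mem_filter.1 hP).2.2⟩
  · intro P hP; rfl
  · intro P hP; rfl


/-- let `G` be a connected tree on `{1,…,s}` and let
`f = Σ_{e ∈ E(G)} c_e t_i t_j` be a nonzero element of `KE(G)` with exactly `r ≥ 1`
nonzero coefficients. Then `|V_T(f)| = Σ_{i=1}^{r-1} (-1)^{i-1} (q-1)^{s-i}`. -/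
theorem card_zeros_edgePolynomial_tree
    (q s : ℕ) (K : Type) [Field K] [Fintype K] [DecidableEq K]
    (hK : Fintype.card K = q)
    (G : SimpleGraph (Fin s)) [DecidableRel G.Adj] (hG : G.IsTree)
    (c : Sym2 (Fin s) → K) (f : MvPolynomial (Fin s) K)
    (hf : f = ∑ e ∈ G.edgeFinset, c e • edgeMonSym2 s K e)
    (hf0 : f ≠ 0)
    (r : ℕ) (hr : r = (G.edgeFinset.filter fun e => c e ≠ 0).card) (hr1 : 1 ≤ r) :
    ({P : Torus s K | eval P.1 f = 0}.ncard : ℤ)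
      = ∑ i ∈ Finset.range (r - 1), (-1) ^ i * ((q : ℤ) - 1) ^ (s - (i + 1)) := by
  rw [ncard_torus_eq, hf]
  exact aux_count q s K hK G hG r hr1 c hr
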